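/- Let f_0,…,f_m : {-1,1}^n → ℝ and g_0,…,g_n : {-1,1}^m → ℝ with g_1,…,g_n and f_1,…,f_m balanced (mean zero). Suppose the generalized polymorphism identity f_0(g_1(z_{1·}),…,g_n(z_{n·})) = g_0(f_1(z_{·1}),…,f_m(z_{·m})) holds for all z ∈ {-1,1}^{n×m}. Then for every S in the Fourier support of f_0 and every choice of sets U_i in the Fourier support of g_i for each i ∈ S, the set T = ∪_{i∈S} U_i lies in the Fourier support of g_0, and for every j ∈ T the set V_j = {i ∈ S : j ∈ U_i} lies in the Fourier support of f_j. -/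

import Mathlib

open Finset
set_option linter.unusedSectionVars false
set_option maxHeartbeats 1000000
set_option maxRecDepth 4000

namespace Stmt6Aux
variable {α : Type*} [Fintype α] [DecidableEq α]

noncomputable def chi (D B : Finset α) : ℝ := (-1 : ℝ) ^ ((D ∩ B).card)

lemma chi_empty (B : Finset α) : chi (∅ : Finset α) B = 1 := by simp [chi]

lemma chi_eq_prod (D B : Finset α) :
    chi D B = ∏ v ∈ D, (if v ∈ B then (-1 : ℝ) else 1) := by
  rw [chi, Finset.prod_ite, Finset.prod_const, Finset.prod_const, one_pow, mul_one,
    Finset.filter_mem_eq_inter]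

lemma chi_eq_prod' (D B : Finset α) :
    chi D B = ∏ v ∈ B, (if v ∈ D then (-1 : ℝ) else 1) := by
  rw [Finset.prod_ite, Finset.prod_const, Finset.prod_const, one_pow, mul_one,
    Finset.filter_mem_eq_inter, chi, Finset.inter_comm]

lemma sum_chi (D : Finset α) :
    ∑ B : Finset α, chi D B = if D = ∅ then (2 : ℝ) ^ (Fintype.card α) else 0 := by
  have h := Finset.prod_add (fun v : α => if v ∈ D then (-1 : ℝ) else 1)
    (fun _ : α => (1 : ℝ)) Finset.univ
  simp only [Finset.prod_const_one, mul_one] at h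
  have h2 : ∑ B : Finset α, chi D B
      = ∏ v : α, ((if v ∈ D then (-1 : ℝ) else 1) + 1) := by
    rw [h, ← Finset.powerset_univ]
    exact Finset.sum_congr rfl fun B _ => chi_eq_prod' D B
  rw [h2]
  by_cases hD : D = ∅
  · simp [hD]; norm_num
  · rw [if_neg hD]
    obtain ⟨v, hv⟩ := Finset.nonempty_iff_ne_empty.2 hD
    exact Finset.prod_eq_zero (Finset.mem_univ v) (by simp [hv])

lemma chi_mul_chi (D D' B : Finset α) : chi D B * chi D' B = chi (symmDiff D D') B := by
  rw [chi, chi, chi, ← pow_add]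
  have hset : symmDiff D D' ∩ B = symmDiff (D ∩ B) (D' ∩ B) := by
    simp [Finset.ext_iff, symmDiff, Finset.mem_union, Finset.mem_sdiff]; tauto
  have hcard : ((D ∩ B).card + (D' ∩ B).card)
      = (symmDiff (D ∩ B) (D' ∩ B)).card + 2 * ((D ∩ B) ∩ (D' ∩ B)).card := by
    have h1 : symmDiff (D ∩ B) (D' ∩ B) = ((D ∩ B) ∪ (D' ∩ B)) \ ((D ∩ B) ∩ (D' ∩ B)) := by
      simp [Finset.ext_iff, symmDiff]; tauto
    have h2 : ((D ∩ B) ∩ (D' ∩ B)) ⊆ ((D ∩ B) ∪ (D' ∩ B)) :=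
      (Finset.inter_subset_left).trans Finset.subset_union_left
    have h3 := Finset.card_union_add_card_inter (D ∩ B) (D' ∩ B)
    have h4 := Finset.card_le_card h2
    rw [h1, Finset.card_sdiff_of_subset h2]
    omega
  rw [hset, hcard, pow_add, pow_mul]
  norm_num

lemma sum_chi_mul_chi (D W : Finset α) :
    ∑ B : Finset α, chi D B * chi W B = if D = W then (2 : ℝ) ^ (Fintype.card α) else 0 := by
  simp only [chi_mul_chi, sum_chi, ← Finset.bot_eq_empty, symmDiff_eq_bot]

lemma sum_sum_chi (c : Finset α → ℝ) (W : Finset α) :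
    ∑ B : Finset α, (∑ T : Finset α, c T * chi T B) * chi W B
      = (2 : ℝ) ^ (Fintype.card α) * c W := by
  simp only [Finset.sum_mul, mul_assoc]
  rw [Finset.sum_comm]
  have : ∀ T : Finset α, ∑ B : Finset α, c T * (chi T B * chi W B)
      = c T * if T = W then (2 : ℝ) ^ (Fintype.card α) else 0 := by
    intro T; rw [← Finset.mul_sum, sum_chi_mul_chi]
  simp only [this, mul_ite, mul_zero]
  rw [Finset.sum_ite_eq' Finset.univ W (fun T => c T * 2 ^ Fintype.card α)]
  simp [mul_comm]

lemma sum_one : ∑ _B : Finset α, (1 : ℝ) = (2 : ℝ) ^ (Fintype.card α) := by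
  rw [Finset.sum_const, Finset.card_univ, Fintype.card_finset, nsmul_eq_mul, mul_one]
  push_cast; ring

/-- Generic evaluation of one side of the polymorphism identity against a character. -/
lemma eval_side {β : Type*} [Fintype β] [DecidableEq β]
    (F : Finset α → ℝ) (Gc : α → Finset β → ℝ) (S₀ : Finset α) (W : α → Finset β)
    (hbal : ∀ i : α, Gc i ∅ = 0) (hW : ∀ i ∈ S₀, W i ≠ ∅) :
    ∑ R : α → Finset β,
        (∑ S' : Finset α, F S' * ∏ i ∈ S', ∑ T : Finset β, Gc i T * chi T (R i))
          * ∏ i ∈ S₀, chi (W i) (R i)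
      = ((2 : ℝ) ^ (Fintype.card β)) ^ (Fintype.card α)
          * (F S₀ * ∏ i ∈ S₀, Gc i (W i)) := by
  classical
  set cb : ℝ := (2 : ℝ) ^ (Fintype.card β) with hcb
  -- the per-coordinate factor
  set G : Finset α → α → Finset β → ℝ := fun S' i B =>
    (if i ∈ S' then ∑ T : Finset β, Gc i T * chi T B else 1)
      * (if i ∈ S₀ then chi (W i) B else 1) with hG
  have step1 : ∀ R : α → Finset β,
      (∑ S' : Finset α, F S' * ∏ i ∈ S', ∑ T : Finset β, Gc i T * chi T (R i))
          * ∏ i ∈ S₀, chi (W i) (R i)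
        = ∑ S' : Finset α, F S' * ∏ i : α, G S' i (R i) := by
    intro R
    rw [Finset.sum_mul]
    refine Finset.sum_congr rfl fun S' _ => ?_
    rw [mul_assoc]
    congr 1
    have e1 : ∏ i ∈ S', (∑ T : Finset β, Gc i T * chi T (R i))
        = ∏ i : α, (if i ∈ S' then ∑ T : Finset β, Gc i T * chi T (R i) else 1) := by
      rw [Finset.prod_ite_mem, Finset.univ_inter]
    have e2 : ∏ i ∈ S₀, chi (W i) (R i)
        = ∏ i : α, (if i ∈ S₀ then chi (W i) (R i) else 1) := by
      rw [Finset.prod_ite_mem, Finset.univ_inter]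
    rw [e1, e2, ← Finset.prod_mul_distrib]
  simp only [step1]
  rw [Finset.sum_comm]
  have step2 : ∀ S' : Finset α,
      ∑ R : α → Finset β, F S' * ∏ i : α, G S' i (R i)
        = F S' * ∏ i : α, ∑ B : Finset β, G S' i B := by
    intro S'
    rw [← Finset.mul_sum]
    congr 1
    rw [Finset.prod_univ_sum (fun _ : α => (Finset.univ : Finset (Finset β)))
      (fun i B => G S' i B), Fintype.piFinset_univ]
  simp only [step2]
  -- compute the inner sums
  have hQ : ∀ (S' : Finset α) (i : α), ∑ B : Finset β, G S' i B
      = (if i ∈ S' then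
          (if i ∈ S₀ then cb * Gc i (W i) else 0)
        else
          (if i ∈ S₀ then 0 else cb)) := by
    intro S' i
    by_cases h1 : i ∈ S' <;> by_cases h2 : i ∈ S₀ <;>
      simp only [hG, h1, h2, if_true, if_false]
    · rw [sum_sum_chi]
    · simp only [mul_one]
      rw [Finset.sum_comm]
      have he : ∀ T : Finset β, ∑ B : Finset β, Gc i T * chi T B
          = Gc i T * (if T = ∅ then cb else 0) := fun T => by
        rw [← Finset.mul_sum, sum_chi]
      rw [Finset.sum_congr rfl fun T _ => he T]
      simp only [mul_ite, mul_zero]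
      rw [Finset.sum_ite_eq' Finset.univ (∅ : Finset β) (fun T => Gc i T * cb)]
      simp [hbal i]
    · simp only [one_mul]
      rw [sum_chi, if_neg (hW i h2)]
    · simp only [one_mul, sum_one, hcb]
  have hred : (∑ S' : Finset α, F S' * ∏ i : α, ∑ B : Finset β, G S' i B)
      = ∑ S' : Finset α, F S' * ∏ i : α,
        (if i ∈ S' then (if i ∈ S₀ then cb * Gc i (W i) else 0)
          else (if i ∈ S₀ then 0 else cb)) :=
    Finset.sum_congr rfl fun S' _ => by
      rw [Finset.prod_congr rfl fun i _ => hQ S' i]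
  rw [hred]
  rw [Finset.sum_eq_single S₀]
  · have hP : ∏ i : α, (if i ∈ S₀ then (if i ∈ S₀ then cb * Gc i (W i) else 0)
        else (if i ∈ S₀ then 0 else cb))
        = cb ^ (Fintype.card α) * ∏ i ∈ S₀, Gc i (W i) := by
      have he : ∀ i : α, (if i ∈ S₀ then (if i ∈ S₀ then cb * Gc i (W i) else 0)
          else (if i ∈ S₀ then 0 else cb)) = cb * (if i ∈ S₀ then Gc i (W i) else 1) := by
        intro i; by_cases h : i ∈ S₀ <;> simp [h]
      rw [Finset.prod_congr rfl (fun i _ => he i), Finset.prod_mul_distrib,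
        Finset.prod_const, Finset.card_univ, Finset.prod_ite_mem, Finset.univ_inter]
    rw [hP]; ring
  · intro S' _ hne
    have : ∃ i : α, (i ∈ S' ∧ i ∉ S₀) ∨ (i ∈ S₀ ∧ i ∉ S') := by
      by_contra hc
      push_neg at hc
      refine hne (Finset.ext fun i => ?_)
      have h1 := (hc i)
      tauto
    obtain ⟨i, hi⟩ := this
    have hz : (if i ∈ S' then (if i ∈ S₀ then cb * Gc i (W i) else 0)
        else (if i ∈ S₀ then 0 else cb)) = 0 := by
      rcases hi with ⟨h1, h2⟩ | ⟨h1, h2⟩ <;> simp [h1, h2]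
    rw [Finset.prod_eq_zero (Finset.mem_univ i) hz, mul_zero]
  · intro h; exact absurd (Finset.mem_univ S₀) h

section
variable {γ : Type*} {δ : Type*} [Fintype γ] [DecidableEq δ] [Fintype δ] [DecidableEq γ]

/-- Transpose of a set-valued function (binary relation). -/
def tr (C : γ → Finset δ) : δ → Finset γ := fun i => Finset.univ.filter (fun j => i ∈ C j)

lemma mem_tr (C : γ → Finset δ) (i : δ) (j : γ) : j ∈ tr C i ↔ i ∈ C j := by
  simp [tr]

lemma tr_tr (C : γ → Finset δ) : tr (tr C) = C := by
  funext j; ext i; rw [mem_tr, mem_tr]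

lemma tr_bijective : Function.Bijective (tr : (γ → Finset δ) → (δ → Finset γ)) :=
  Function.bijective_iff_has_inverse.2 ⟨tr, tr_tr, tr_tr⟩

end
end Stmt6Aux

open Stmt6Aux

/-- Support propagation for generalized polymorphisms with balanced
inner functions. Here `f 0 = f₀`, `f j.succ = f_j` for `j ∈ [m]`, and similarly for `g`;
`fc`, `gc` are the Fourier coefficient functions, and each function is identified with
its multilinear extension. -/
theorem stmt_6 (n m : ℕ)
    (f : Fin (m + 1) → (Fin n → ℝ) → ℝ) (g : Fin (n + 1) → (Fin m → ℝ) → ℝ)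
    (fc : Fin (m + 1) → Finset (Fin n) → ℝ) (gc : Fin (n + 1) → Finset (Fin m) → ℝ)
    (hfexp : ∀ (j : Fin (m + 1)) (x : Fin n → ℝ),
      f j x = ∑ S : Finset (Fin n), fc j S * ∏ i ∈ S, x i)
    (hgexp : ∀ (i : Fin (n + 1)) (y : Fin m → ℝ),
      g i y = ∑ T : Finset (Fin m), gc i T * ∏ j ∈ T, y j)
    (hbalf : ∀ j : Fin m, fc j.succ ∅ = 0)
    (hbalg : ∀ i : Fin n, gc i.succ ∅ = 0)
    (hpoly : ∀ z : Fin n → Fin m → ℝ, (∀ i j, z i j = 1 ∨ z i j = -1) →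
      f 0 (fun i => g i.succ (z i)) = g 0 (fun j => f j.succ (fun i => z i j)))
    (S : Finset (Fin n)) (hS : fc 0 S ≠ 0)
    (U : Fin n → Finset (Fin m)) (hU : ∀ i ∈ S, gc i.succ (U i) ≠ 0) :
    gc 0 (S.biUnion U) ≠ 0 ∧
      ∀ j ∈ S.biUnion U, fc j.succ (S.filter (fun i => j ∈ U i)) ≠ 0 := by
  classical
  set T0 : Finset (Fin m) := S.biUnion U with hT0
  set V : Fin m → Finset (Fin n) := fun j => S.filter (fun i => j ∈ U i) with hV
  have hUne : ∀ i ∈ S, U i ≠ ∅ := by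
    intro i hi h
    exact hU i hi (h ▸ hbalg i)
  have hVne : ∀ j ∈ T0, V j ≠ ∅ := by
    intro j hj
    obtain ⟨i, hiS, hiU⟩ := Finset.mem_biUnion.1 hj
    exact Finset.ne_empty_of_mem (Finset.mem_filter.2 ⟨hiS, hiU⟩)
  -- evaluation of the left-hand side against the character of S, U
  have hLHS : ∑ R : Fin n → Finset (Fin m),
      f 0 (fun i => g i.succ (fun j => if j ∈ R i then (-1 : ℝ) else 1))
        * ∏ i ∈ S, chi (U i) (R i)
      = ((2 : ℝ) ^ m) ^ n * (fc 0 S * ∏ i ∈ S, gc i.succ (U i)) := by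
    have h1 : ∀ R : Fin n → Finset (Fin m),
        f 0 (fun i => g i.succ (fun j => if j ∈ R i then (-1 : ℝ) else 1))
          = ∑ S' : Finset (Fin n), fc 0 S'
              * ∏ i ∈ S', ∑ T : Finset (Fin m), gc i.succ T * chi T (R i) := by
      intro R
      rw [hfexp]
      refine Finset.sum_congr rfl fun S' _ => ?_
      congr 1
      refine Finset.prod_congr rfl fun i _ => ?_
      rw [hgexp]
      exact Finset.sum_congr rfl fun T _ => by rw [chi_eq_prod]
    have h2 : (∑ R : Fin n → Finset (Fin m),
        f 0 (fun i => g i.succ (fun j => if j ∈ R i then (-1 : ℝ) else 1))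
          * ∏ i ∈ S, chi (U i) (R i))
        = ∑ R : Fin n → Finset (Fin m),
          (∑ S' : Finset (Fin n), fc 0 S'
              * ∏ i ∈ S', ∑ T : Finset (Fin m), gc i.succ T * chi T (R i))
            * ∏ i ∈ S, chi (U i) (R i) :=
      Finset.sum_congr rfl fun R _ => by rw [h1 R]
    rw [h2]
    have := eval_side (fc 0) (fun i => gc i.succ) S U hbalg hUne
    simpa using this
  -- evaluation of the right-hand side against the same character
  have hRHS : ∑ R : Fin n → Finset (Fin m),
      g 0 (fun j => f j.succ (fun i => if j ∈ R i then (-1 : ℝ) else 1))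
        * ∏ i ∈ S, chi (U i) (R i)
      = ((2 : ℝ) ^ n) ^ m * (gc 0 T0 * ∏ j ∈ T0, fc j.succ (V j)) := by
    have hpt : ∀ C : Fin m → Finset (Fin n),
        (∑ T' : Finset (Fin m), gc 0 T'
            * ∏ j ∈ T', ∑ W : Finset (Fin n), fc j.succ W * chi W (C j))
          * ∏ j ∈ T0, chi (V j) (C j)
        = g 0 (fun j => f j.succ (fun i => if j ∈ tr C i then (-1 : ℝ) else 1))
            * ∏ i ∈ S, chi (U i) (tr C i) := by
      intro C
      congr 1
      · -- function part
        rw [hgexp]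
        refine Finset.sum_congr rfl fun T' _ => ?_
        congr 1
        refine Finset.prod_congr rfl fun j _ => ?_
        rw [hfexp]
        refine Finset.sum_congr rfl fun W _ => ?_
        congr 1
        rw [chi_eq_prod]
        exact Finset.prod_congr rfl fun i _ => by simp [mem_tr]
      · -- weight part
        have e1 : ∏ j ∈ T0, chi (V j) (C j)
            = ∏ j ∈ T0, ∏ i ∈ S, (if j ∈ U i then (if i ∈ C j then (-1 : ℝ) else 1) else 1) := by
          refine Finset.prod_congr rfl fun j _ => ?_
          rw [chi_eq_prod, hV]
          rw [Finset.prod_filter]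
        rw [e1, ← Finset.prod_comm]
        refine Finset.prod_congr rfl fun i hi => ?_
        have hsub : U i ⊆ T0 := Finset.subset_biUnion_of_mem U hi
        have e2 : ∏ j ∈ T0, (if j ∈ U i then (if i ∈ C j then (-1 : ℝ) else 1) else 1)
            = ∏ j ∈ U i, (if i ∈ C j then (-1 : ℝ) else 1) := by
          rw [Finset.prod_ite_mem, Finset.inter_eq_right.2 hsub]
        rw [e2, chi_eq_prod]
        exact Finset.prod_congr rfl fun j _ => by simp [mem_tr]
    calc (∑ R : Fin n → Finset (Fin m),
        g 0 (fun j => f j.succ (fun i => if j ∈ R i then (-1 : ℝ) else 1))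
          * ∏ i ∈ S, chi (U i) (R i))
        = ∑ C : Fin m → Finset (Fin n),
            (∑ T' : Finset (Fin m), gc 0 T'
                * ∏ j ∈ T', ∑ W : Finset (Fin n), fc j.succ W * chi W (C j))
              * ∏ j ∈ T0, chi (V j) (C j) :=
          (Fintype.sum_bijective tr tr_bijective _ _ hpt).symm
      _ = ((2 : ℝ) ^ n) ^ m * (gc 0 T0 * ∏ j ∈ T0, fc j.succ (V j)) := by
          simpa using eval_side (gc 0) (fun j => fc j.succ) T0 V hbalf hVne
  -- the two evaluations agree by the polymorphism identity
  have heq : ((2 : ℝ) ^ m) ^ n * (fc 0 S * ∏ i ∈ S, gc i.succ (U i))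
      = ((2 : ℝ) ^ n) ^ m * (gc 0 T0 * ∏ j ∈ T0, fc j.succ (V j)) := by
    rw [← hLHS, ← hRHS]
    refine Finset.sum_congr rfl fun R _ => ?_
    congr 1
    exact hpoly (fun i j => if j ∈ R i then (-1 : ℝ) else 1)
      (fun i j => by by_cases h : j ∈ R i <;> simp [h])
  have hpow : ((2 : ℝ) ^ m) ^ n = ((2 : ℝ) ^ n) ^ m := by
    rw [← pow_mul, ← pow_mul, Nat.mul_comm]
  rw [hpow] at heq
  have hc : ((2 : ℝ) ^ n) ^ m ≠ 0 := by positivity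
  have hkey : gc 0 T0 * ∏ j ∈ T0, fc j.succ (V j) ≠ 0 := by
    rw [← mul_left_cancel₀ hc heq]
    exact mul_ne_zero hS (Finset.prod_ne_zero_iff.2 hU)
  refine ⟨(mul_ne_zero_iff.1 hkey).1, fun j hj => ?_⟩
  exact Finset.prod_ne_zero_iff.1 (mul_ne_zero_iff.1 hkey).2 j hj
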